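/- Let Φ be an imaginary conic defining the elliptic plane, A, B two points, U, V the (imaginary) intersections of line AB with Φ, and A_p, B_p the conjugate points of A, B. Then (AB B_p A_p) = cos²‖AB‖, where ‖AB‖ = (1/(2i))·log(UVAB). -/

import Mathlib

/-- Cross ratio `(ABCD)` of four points of a (complex) projective line, given in an
affine coordinate on the line in which all the relevant points are finite. -/
noncomputable def crC (a b c d : ℂ) : ℂ := ((c - a) / (c - b)) / ((d - a) / (d - b))

set_option maxHeartbeats 2000000 in
/-- Cayley–Klein elliptic plane: the absolute conic is imaginary, so a real line meets
it at a pair of conjugate non-real points `U, V = conj U`.  For real points `A, B` with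
conjugate points `A_p, B_p` (harmonic conjugates with respect to `U, V`), one has
`(AB B_p A_p) = cos² ‖AB‖` where `‖AB‖ = (1/(2i))·log (UVAB)` is the elliptic distance. -/
theorem crossRatio_eq_cos_sq_dist (U V A B Ap Bp : ℂ)
    (hU : U.im ≠ 0) (hV : V = (starRingEnd ℂ) U)
    (hA : A.im = 0) (hB : B.im = 0) (hAB : A ≠ B)
    (hAp : crC U V A Ap = -1) (hBp : crC U V B Bp = -1) :
    crC A B Bp Ap =
      Complex.cos ((1 / (2 * Complex.I)) * Complex.log (crC U V A B)) ^ 2 := by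
  have hUV : U - V ≠ 0 := by
    intro h
    have := congrArg Complex.im h
    simp [hV] at this
    apply hU; linarith
  have hAU : A - U ≠ 0 := by
    intro h
    have := congrArg Complex.im h
    simp [hA] at this
    exact hU (by simp [this])
  have hAV : A - V ≠ 0 := by
    intro h
    have := congrArg Complex.im h
    simp [hA, hV] at this
    exact hU (by simp [this])
  have hBU : B - U ≠ 0 := by
    intro h
    have := congrArg Complex.im h
    simp [hB] at this
    exact hU (by simp [this])
  have hBV : B - V ≠ 0 := by
    intro h
    have := congrArg Complex.im h
    simp [hB, hV] at this
    exact hU (by simp [this])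
  have hApU : Ap - U ≠ 0 := by
    intro h
    rw [crC, sub_eq_zero.mp h] at hAp
    simp at hAp
  have hApV : Ap - V ≠ 0 := by
    intro h
    rw [crC, sub_eq_zero.mp h] at hAp
    simp at hAp
  have hBpU : Bp - U ≠ 0 := by
    intro h
    rw [crC, sub_eq_zero.mp h] at hBp
    simp at hBp
  have hBpV : Bp - V ≠ 0 := by
    intro h
    rw [crC, sub_eq_zero.mp h] at hBp
    simp at hBp
  rw [crC] at hAp hBp
  field_simp at hAp hBp
  -- hAp : (A - U) * (Ap - V) = -((A - V) * (Ap - U))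
  have hdA : 2 * A - U - V ≠ 0 := by
    intro h
    have h0 : (A - U) * (U - V) = 0 := by linear_combination hAp + (U - Ap) * h
    rcases mul_eq_zero.mp h0 with h1 | h1
    exacts [hAU h1, hUV h1]
  have hdB : 2 * B - U - V ≠ 0 := by
    intro h
    have h0 : (B - U) * (U - V) = 0 := by linear_combination hBp + (U - Bp) * h
    rcases mul_eq_zero.mp h0 with h1 | h1
    exacts [hBU h1, hUV h1]
  have hApv : Ap = (A * (U + V) - 2 * U * V) / (2 * A - U - V) := by
    rw [eq_div_iff hdA]
    linear_combination hAp
  have hBpv : Bp = (B * (U + V) - 2 * U * V) / (2 * B - U - V) := by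
    rw [eq_div_iff hdB]
    linear_combination hBp
  have hApA : Ap - A ≠ 0 := by
    intro h
    have h0 : 2 * ((A - U) * (A - V)) = 0 := by
      linear_combination hAp - (2 * A - U - V) * h
    simp [sub_eq_zero] at h0
    rcases h0 with h1 | h1
    exacts [hAU (sub_eq_zero.mpr h1), hAV (sub_eq_zero.mpr h1)]
  have hBpB : Bp - B ≠ 0 := by
    intro h
    have h0 : 2 * ((B - U) * (B - V)) = 0 := by
      linear_combination hBp - (2 * B - U - V) * h
    simp [sub_eq_zero] at h0
    rcases h0 with h1 | h1
    exacts [hBU (sub_eq_zero.mpr h1), hBV (sub_eq_zero.mpr h1)]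
  -- the cross ratio c
  set c : ℂ := crC U V A B with hc
  have hc0 : c ≠ 0 := by
    rw [hc, crC]
    exact div_ne_zero (div_ne_zero hAU hAV) (div_ne_zero hBU hBV)
  -- cosine computation
  have hcos : Complex.cos ((1 / (2 * Complex.I)) * Complex.log c) ^ 2
      = (c + 1) ^ 2 / (4 * c) := by
    set s : ℂ := Complex.exp (Complex.log c / 2) with hs
    have hs0 : s ≠ 0 := Complex.exp_ne_zero _
    have hss : s * s = c := by
      rw [hs, ← Complex.exp_add]
      rw [show Complex.log c / 2 + Complex.log c / 2 = Complex.log c by ring]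
      exact Complex.exp_log hc0
    have h2 : 2 * Complex.cos ((1 / (2 * Complex.I)) * Complex.log c) = s + s⁻¹ := by
      rw [Complex.two_cos]
      congr 1
      · rw [hs]; congr 1
        field_simp
      · rw [hs, ← Complex.exp_neg]; congr 1
        field_simp
    have hsinv : s⁻¹ = s / c := by
      rw [eq_div_iff hc0, ← hss]
      field_simp
    rw [hsinv] at h2
    have hcosval : Complex.cos ((1 / (2 * Complex.I)) * Complex.log c) = (s + s / c) / 2 := by
      linear_combination h2 / 2
    rw [hcosval]
    field_simp
    ring_nf
    linear_combination (4 * (c + 1) ^ 2) * hss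
  have hstep1 : (c + 1) ^ 2 / (4 * c) =
      ((A - U) * (B - V) + (A - V) * (B - U)) ^ 2 /
        (4 * ((A - U) * (B - V) * ((A - V) * (B - U)))) := by
    rw [hc, crC]
    field_simp
  have hD1 : (Bp - B) * (Ap - A) ≠ 0 := mul_ne_zero hBpB hApA
  have hD2 : (4 : ℂ) * ((A - U) * (B - V) * ((A - V) * (B - U))) ≠ 0 := by
    exact mul_ne_zero (by norm_num) (mul_ne_zero (mul_ne_zero hAU hBV) (mul_ne_zero hAV hBU))
  rw [hcos, hstep1, crC, div_div_eq_mul_div, div_mul_eq_mul_div, div_div,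
    div_eq_div_iff hD1 hD2, hApv, hBpv]
  have hdB' : B * 2 - U - V ≠ 0 := by rw [mul_comm]; exact hdB
  field_simp
  ring
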